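/- Thin bars in explicit fans are finite (the classical content of Theorem 12.4, FT ↔ 'in an explicit fan every thin bar is finite'): let S : List ℕ → Bool be a spread-law that is an explicit fan-law, i.e. there exists g : List ℕ → ℕ such that for all s : List ℕ and m : ℕ, S (s ++ [m]) = true → m ≤ g s. If A : List ℕ → Bool is a thin bar in F_S, then the set {t : List ℕ | A t = true} is finite. -/

import Mathlib

/-- The first `n` values of `α` as a list. -/
def segN (α : ℕ → ℕ) (n : ℕ) : List ℕ := List.ofFn fun i : Fin n => α i

/-- `S` is a spread-law. -/
def SpreadLaw (S : List ℕ → Bool) : Prop :=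
  ∀ s : List ℕ, S s = true ↔ ∃ m, S (s ++ [m]) = true

/-- `A` is a thin bar in the spread `F_S`. -/
def ThinBar (S A : List ℕ → Bool) : Prop :=
  (∀ t, A t = true → S t = true) ∧
  (∀ t u, A t = true → A u = true → t <+: u → t = u) ∧
  (∀ α : ℕ → ℕ, (∀ n, S (segN α n) = true) → ∃ n, A (segN α n) = true)

/-- Thin bars in explicit fans are finite (the classical content of Theorem 12.4). -/
theorem thin_bar_in_explicit_fan_finite (S : List ℕ → Bool)
    (hspread : SpreadLaw S)
    (hfan : ∃ g : List ℕ → ℕ, ∀ (s : List ℕ) (m : ℕ), S (s ++ [m]) = true → m ≤ g s)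
    (A : List ℕ → Bool) (hbar : ThinBar S A) :
    {t : List ℕ | A t = true}.Finite := by
  classical
  obtain ⟨g, hg⟩ := hfan
  obtain ⟨hAS, hthin, hbarall⟩ := hbar
  -- S is closed under prefixes
  have hpref : ∀ t : List ℕ, S t = true → ∀ u, u <+: t → S u = true := by
    intro t
    induction t using List.reverseRecOn with
    | nil =>
      intro h u hu
      rw [List.prefix_nil.mp hu]; exact h
    | append_singleton l m ih =>
      intro h u hu
      have hl : S l = true := (hspread l).mpr ⟨m, h⟩
      rcases List.prefix_concat_iff.mp hu with h1 | h1
      · rw [h1]; exact h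
      · exact ih hl u h1
  set B : Set (List ℕ) := {t | S t = true ∧ ∀ u, u <+: t → u ≠ t → A u = false} with hB
  have hBprefclosed : ∀ t ∈ B, ∀ u, u <+: t → u ∈ B := by
    rintro t ⟨hS, hA⟩ u hu
    exact ⟨hpref t hS u hu, fun v hv hvne => hA v (hv.trans hu)
      (fun hvt => hvne (hv.eq_of_length (Nat.le_antisymm hv.length_le (hvt ▸ hu).length_le)))⟩
  set D : List ℕ → Set (List ℕ) := fun s => {t ∈ B | s <+: t} with hD
  have hBfin : B.Finite := by
    by_contra hinf
    have hinf : B.Infinite := hinf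
    have hstep : ∀ s : List ℕ, (D s).Infinite → ∃ m, (D (s ++ [m])).Infinite := by
      intro s hs
      by_contra hcon
      push_neg at hcon
      have hsub : D s ⊆ insert s (⋃ m ∈ Finset.range (g s + 1), D (s ++ [m])) := by
        rintro t ⟨htB, hst⟩
        rcases eq_or_ne t s with rfl | hne
        · exact Set.mem_insert _ _
        · obtain ⟨r, rfl⟩ := hst
          have hr : r ≠ [] := by rintro rfl; simp at hne
          obtain ⟨m, r', rfl⟩ := List.exists_cons_of_ne_nil hr
          have hpre : s ++ [m] <+: s ++ m :: r' := ⟨r', by simp⟩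
          have hmB : (s ++ [m]) ∈ B := hBprefclosed _ htB _ hpre
          have hm : m ≤ g s := hg s m hmB.1
          refine Set.mem_insert_iff.mpr (Or.inr ?_)
          simp only [Set.mem_iUnion]
          exact ⟨m, Finset.mem_range.mpr (Nat.lt_succ_of_le hm), htB, hpre⟩
      have hfinU : (insert s (⋃ m ∈ Finset.range (g s + 1), D (s ++ [m]))).Finite := by
        refine Set.Finite.insert s (Set.Finite.biUnion (Finset.range (g s + 1)).finite_toSet
          (fun m _ => ?_))
        exact hcon m
      exact hs (hfinU.subset hsub)
    have hD0 : (D []).Infinite := by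
      refine hinf.mono ?_
      intro t ht
      exact ⟨ht, List.nil_prefix⟩
    let f : ∀ n : ℕ, {l : List ℕ // (D l).Infinite ∧ l.length = n} := fun n =>
      Nat.rec ⟨[], hD0, rfl⟩ (fun n p =>
        ⟨p.1 ++ [Classical.choose (hstep p.1 p.2.1)],
          Classical.choose_spec (hstep p.1 p.2.1), by simp [p.2.2]⟩) n
    set α : ℕ → ℕ := fun n => Classical.choose (hstep (f n).1 (f n).2.1) with hα
    have hfsucc : ∀ n, (f (n + 1)).1 = (f n).1 ++ [α n] := fun n => rfl
    have hseg : ∀ n, segN α n = (f n).1 := by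
      intro n
      induction n with
      | zero => rfl
      | succ n ih =>
        have h1 : segN α (n + 1) = segN α n ++ [α n] := by
          rw [segN, List.ofFn_succ']
          simp [segN]
        rw [h1, ih, hfsucc]
    have hmem : ∀ n, (f n).1 ∈ B := by
      intro n
      obtain ⟨t, ⟨htB, hpre⟩⟩ := (f n).2.1.nonempty
      exact hBprefclosed t htB _ hpre
    have hSall : ∀ n, S (segN α n) = true := by
      intro n; rw [hseg]; exact (hmem n).1
    obtain ⟨n, hAn⟩ := hbarall α hSall
    have hmem' := (hmem (n + 1)).2 (segN α n) (by rw [hseg, hfsucc]; exact ⟨[α n], rfl⟩)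
      (by rw [hseg, hfsucc]; simp)
    rw [hmem'] at hAn
    exact Bool.false_ne_true hAn
  refine hBfin.subset ?_
  intro t ht
  refine ⟨hAS t ht, ?_⟩
  intro u hu hne
  by_contra hAu
  rw [Bool.not_eq_false] at hAu
  exact hne (hthin u t hAu ht hu)
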